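/- Let H be a real inner product space, let T and G be symmetric (self-adjoint) continuous linear operators on H, let φ ∈ H be a unit vector with T φ = λ_1 φ for some λ_1 ∈ ℝ, and set ψ := G φ − ⟪G φ, φ⟫ φ. Let Λ ∈ ℝ satisfy Λ ≥ λ_1 and Λ‖ψ‖² ≤ ⟪T ψ, ψ⟫. Then (Λ − λ_1) ⟪[T,G] φ, G φ⟫ ≤ ‖[T,G] φ‖². (This is the abstract content of inequality (4.8) in the proof of Theorem 4.1.) -/
import Mathlib


open scoped RealInnerProductSpace

/-- Abstract content of inequality (4.8) in the proof of Theorem 4.1. -/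
theorem abstract_four_eight
    {H : Type*} [NormedAddCommGroup H] [InnerProductSpace ℝ H]
    (T G : H →L[ℝ] H)
    (hT : ∀ x y : H, ⟪T x, y⟫ = ⟪x, T y⟫)
    (hG : ∀ x y : H, ⟪G x, y⟫ = ⟪x, G y⟫)
    (φ : H) (hφ : ‖φ‖ = 1) (lam1 : ℝ) (heig : T φ = lam1 • φ)
    (ψ : H) (hψ : ψ = G φ - ⟪G φ, φ⟫ • φ)
    (Λ : ℝ) (hΛ : lam1 ≤ Λ)
    (hgap : Λ * ‖ψ‖ ^ 2 ≤ ⟪T ψ, ψ⟫) :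
    (Λ - lam1) * ⟪(T ∘L G - G ∘L T) φ, G φ⟫ ≤ ‖(T ∘L G - G ∘L T) φ‖ ^ 2 := by
  have hφφ : ⟪φ, φ⟫ = (1:ℝ) := by
    rw [real_inner_self_eq_norm_sq, hφ]; norm_num
  have hψφ : ⟪ψ, φ⟫ = (0:ℝ) := by
    rw [hψ, inner_sub_left, real_inner_smul_left, hφφ]; ring
  have hC : (T ∘L G - G ∘L T) φ = T ψ - lam1 • ψ := by
    simp only [ContinuousLinearMap.sub_apply, ContinuousLinearMap.comp_apply, heig, map_smul,
      hψ, map_sub, smul_sub, smul_smul, mul_comm]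
    abel
  set C := (T ∘L G - G ∘L T) φ with hCdef
  have hs : ⟪C, ψ⟫ = ⟪T ψ, ψ⟫ - lam1 * ‖ψ‖^2 := by
    rw [hC, inner_sub_left, real_inner_smul_left, real_inner_self_eq_norm_sq]
  have hCφ : ⟪C, φ⟫ = 0 := by
    rw [hC, inner_sub_left, real_inner_smul_left, hT, heig, real_inner_smul_right, hψφ]
    ring
  have hGφ : G φ = ψ + ⟪G φ, φ⟫ • φ := by rw [hψ]; abel
  have hCG : ⟪C, G φ⟫ = ⟪T ψ, ψ⟫ - lam1 * ‖ψ‖^2 := by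
    rw [hGφ, inner_add_right, real_inner_smul_right, hCφ, hs]; ring
  have hcs : ⟪C, ψ⟫ * ⟪C, ψ⟫ ≤ ‖C‖^2 * ‖ψ‖^2 := by
    have := real_inner_mul_inner_self_le C ψ
    rwa [real_inner_self_eq_norm_sq, real_inner_self_eq_norm_sq] at this
  rw [hCG]
  rw [hs] at hcs
  have hn : (0:ℝ) ≤ ‖ψ‖^2 := by positivity
  rcases eq_or_lt_of_le hn with h0 | h0
  · -- ψ = 0
    have hψ0 : ψ = 0 := by
      have : ‖ψ‖ = 0 := by nlinarith
      simpa using this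
    have hC0 : ‖C‖ = 0 := by rw [hC, hψ0]; simp
    simp [hψ0, hC0]
  · have hsge : (Λ - lam1) * ‖ψ‖^2 ≤ ⟪T ψ, ψ⟫ - lam1 * ‖ψ‖^2 := by nlinarith
    have hsnn : (0:ℝ) ≤ ⟪T ψ, ψ⟫ - lam1 * ‖ψ‖^2 := le_trans (by nlinarith) hsge
    nlinarith [sq_nonneg (‖C‖)]
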